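/- (Thurston stability on the interval) Let Γ be a finitely generated group whose abelianization Γ/[Γ,Γ] is finite. Suppose Γ acts on [0,1] by C¹ diffeomorphisms fixing 0; precisely, suppose γ ↦ f_γ is a group homomorphism from Γ into the group of bijections of [0,1] such that each f_γ satisfies f_γ(0) = 0 and f_γ is continuously differentiable on [0,1] (one-sided at the endpoints) with everywhere strictly positive derivative. Then the action is trivial: f_γ(x) = x for every γ ∈ Γ and every x ∈ [0,1]. -/

import Mathlib

open Set Filter Topology


lemma homtriv {Γ : Type*} [Group Γ] (hab : Finite (Abelianization Γ)) (φ : Γ → ℝ)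
    (hφ : ∀ γ η, φ (γ*η) = φ γ + φ η) : ∀ γ, φ γ = 0 := by
  have h1 : φ 1 = 0 := by have := hφ 1 1; simp at this; linarith
  let ψ : Γ →* Multiplicative ℝ :=
    { toFun := fun γ => Multiplicative.ofAdd (φ γ)
      map_one' := by simp [h1]
      map_mul' := fun a b => by simp [hφ] }
  let ψ' : Abelianization Γ →* Multiplicative ℝ := Abelianization.lift ψ
  intro γ
  have hfin : IsOfFinOrder (Abelianization.of γ) := isOfFinOrder_of_finite _
  obtain ⟨m, hm, hpow⟩ := hfin.exists_pow_eq_one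
  have : ψ γ ^ m = 1 := by
    have : ψ' ((Abelianization.of γ) ^ m) = 1 := by rw [hpow]; simp
    rwa [map_pow, Abelianization.lift_apply_of] at this
  have : (m : ℝ) * φ γ = 0 := by
    have := congrArg Multiplicative.toAdd this
    simpa [ψ, ← ofAdd_nsmul, nsmul_eq_mul] using this
  have hm' : (m:ℝ) ≠ 0 := Nat.cast_ne_zero.2 hm.ne'
  exact (mul_eq_zero.1 this).resolve_left hm'

theorem core {Γ : Type*} [Group Γ]
    (hab : Finite (Abelianization Γ))
    (f : Γ → ℝ → ℝ) (f' : Γ → ℝ → ℝ)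
    (hone : ∀ x ∈ Icc (0:ℝ) 1, f 1 x = x)
    (hmul : ∀ γ₁ γ₂ : Γ, ∀ x ∈ Icc (0:ℝ) 1, f (γ₁ * γ₂) x = f γ₁ (f γ₂ x))
    (hbij : ∀ γ : Γ, BijOn (f γ) (Icc (0:ℝ) 1) (Icc (0:ℝ) 1))
    (hderiv : ∀ γ : Γ, ∀ x ∈ Icc (0:ℝ) 1,
      HasDerivWithinAt (f γ) (f' γ x) (Icc (0:ℝ) 1) x)
    (hderivcont : ∀ γ : Γ, ContinuousOn (f' γ) (Icc (0:ℝ) 1))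
    (hderivpos : ∀ γ : Γ, ∀ x ∈ Icc (0:ℝ) 1, 0 < f' γ x)
    (S : Finset Γ) (hS1 : (1:Γ) ∈ S)
    (hSgen : Submonoid.closure (S : Set Γ) = ⊤)
    (a : ℝ) (ha : a ∈ Ico (0:ℝ) 1) (hfixa : ∀ γ, f γ a = a) :
    ∃ δ > 0, ∀ x ∈ Icc a (min (a+δ) 1), ∀ γ : Γ, f γ x = x := by
  have haI : a ∈ Icc (0:ℝ) 1 := ⟨ha.1, ha.2.le⟩
  have hmaps : ∀ γ : Γ, MapsTo (f γ) (Icc (0:ℝ) 1) (Icc (0:ℝ) 1) := fun γ => (hbij γ).mapsTo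
  -- strict monotonicity
  have hmono : ∀ γ : Γ, StrictMonoOn (f γ) (Icc (0:ℝ) 1) := by
    intro γ
    apply strictMonoOn_of_hasDerivWithinAt_pos (convex_Icc 0 1)
      (fun t ht => (hderiv γ t ht).continuousWithinAt)
    · intro t ht
      rw [interior_Icc] at ht
      exact ((hderiv γ t (Ioo_subset_Icc_self ht)).mono (by rw [interior_Icc]; exact Ioo_subset_Icc_self))
    · intro t ht
      rw [interior_Icc] at ht
      exact hderivpos γ t (Ioo_subset_Icc_self ht)
  have hga : ∀ γ : Γ, ∀ x ∈ Icc (0:ℝ) 1, a ≤ x → a ≤ f γ x := by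
    intro γ x hx hax
    calc a = f γ a := (hfixa γ).symm
    _ ≤ f γ x := (hmono γ).monotoneOn haI hx hax
  -- fixed by S implies fixed by all
  have hfixall : ∀ x ∈ Icc (0:ℝ) 1, (∀ s ∈ S, f s x = x) → ∀ γ : Γ, f γ x = x := by
    intro x hx hfs γ
    have hγ : γ ∈ Submonoid.closure (S : Set Γ) := by rw [hSgen]; trivial
    induction hγ using Submonoid.closure_induction with
    | mem s hs => exact hfs s hs
    | one => exact hone x hx
    | mul γ η _ _ hγ hη => rw [hmul γ η x hx, hη, hγ]
  -- derivative of products at a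
  have hu : UniqueDiffWithinAt ℝ (Icc (0:ℝ) 1) a := uniqueDiffOn_Icc one_pos a haI
  have hchain : ∀ γ η : Γ, f' (γ*η) a = f' γ a * f' η a := by
    intro γ η
    have hcomp : HasDerivWithinAt (f (γ*η)) (f' γ a * f' η a) (Icc (0:ℝ) 1) a := by
      have h1 : HasDerivWithinAt (f γ ∘ f η) (f' γ (f η a) * f' η a) (Icc (0:ℝ) 1) a :=
        (hderiv γ (f η a) (hmaps η haI)).comp a (hderiv η a haI) (hmaps η)
      rw [hfixa η] at h1
      exact h1.congr (fun y hy => (hmul γ η y hy)) (hmul γ η a haI)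
    rw [← (hderiv (γ*η) a haI).derivWithin hu, hcomp.derivWithin hu]
  -- derivative 1 at a
  have hd1 : ∀ γ : Γ, f' γ a = 1 := by
    have hpos : ∀ γ : Γ, 0 < f' γ a := fun γ => hderivpos γ a haI
    have htriv := homtriv hab (fun γ => Real.log (f' γ a)) (by
      intro γ η
      simp only [hchain]
      exact Real.log_mul (hpos γ).ne' (hpos η).ne')
    intro γ
    have := htriv γ
    have this : Real.log (f' γ a) = 0 := this
    rcases Real.log_eq_zero.1 this with h | h | h
    · exact absurd h (hpos γ).ne'
    · exact h
    · linarith [hpos γ]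
  -- the small intervals
  set J : ℝ → Set ℝ := fun δ => Icc a (min (a+δ) 1) with hJ
  have hJsub : ∀ δ, J δ ⊆ Icc (0:ℝ) 1 := by
    intro δ t ht
    exact ⟨le_trans ha.1 ht.1, le_trans ht.2 (min_le_right _ _)⟩
  have hJmono : ∀ {δ₁ δ₂}, δ₁ ≤ δ₂ → J δ₁ ⊆ J δ₂ := by
    intro δ₁ δ₂ h t ht
    exact ⟨ht.1, le_trans ht.2 (min_le_min (by linarith) le_rfl)⟩
  have haJ : ∀ δ, 0 ≤ δ → a ∈ J δ := fun δ h0 => ⟨le_rfl, le_min (by linarith) ha.2.le⟩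
  have hJdist : ∀ δ, ∀ t ∈ J δ, |t - a| ≤ δ := by
    intro δ t ht
    rw [abs_of_nonneg (by linarith [ht.1])]
    have := le_trans ht.2 (min_le_left _ _); linarith
  -- E1
  have hE1 : ∀ γ : Γ, ∀ ε > (0:ℝ), ∃ δ > (0:ℝ), ∀ x ∈ J δ, ∀ y ∈ J δ,
      |(f γ y - y) - (f γ x - x)| ≤ ε * |y - x| := by
    intro γ ε hε
    have hc : ContinuousWithinAt (f' γ) (Icc (0:ℝ) 1) a := hderivcont γ a haI
    rw [Metric.continuousWithinAt_iff] at hc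
    obtain ⟨δ, hδ0, hδ⟩ := hc ε hε
    refine ⟨δ/2, by linarith, ?_⟩
    intro x hx y hy
    have hbound : ∀ t ∈ J (δ/2), ‖f' γ t - 1‖ ≤ ε := by
      intro t ht
      have h1 : dist t a < δ := lt_of_le_of_lt (hJdist _ t ht) (by linarith)
      have := hδ (hJsub _ ht) h1
      rw [Real.dist_eq, hd1 γ] at this
      exact this.le
    have hg : ∀ t ∈ J (δ/2), HasDerivWithinAt (fun u => f γ u - u) (f' γ t - 1) (J (δ/2)) t :=
      fun t ht => ((hderiv γ t (hJsub _ ht)).mono (hJsub _)).sub (hasDerivWithinAt_id t _)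
    have := Convex.norm_image_sub_le_of_norm_hasDerivWithin_le hg hbound
      (convex_Icc _ _) hx hy
    simpa [Real.norm_eq_abs] using this
  -- target neighborhood: f η maps small J into given J
  have hJin : ∀ η : Γ, ∀ δ₃ > (0:ℝ), ∃ δ₄ > (0:ℝ), ∀ x ∈ J δ₄, f η x ∈ J δ₃ := by
    intro η δ₃ hδ₃
    have hc : ContinuousWithinAt (f η) (Icc (0:ℝ) 1) a := (hderiv η a haI).continuousWithinAt
    rw [Metric.continuousWithinAt_iff] at hc
    obtain ⟨δ, hδ0, hδ⟩ := hc δ₃ hδ₃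
    refine ⟨δ/2, by linarith, ?_⟩
    intro x hx
    have hxI : x ∈ Icc (0:ℝ) 1 := hJsub _ hx
    have h1 : dist x a < δ := lt_of_le_of_lt (hJdist _ x hx) (by linarith)
    have h2 := hδ hxI h1
    rw [Real.dist_eq, hfixa η] at h2
    have h3 : a ≤ f η x := hga η x hxI hx.1
    have h4 : f η x ≤ 1 := (hmaps η hxI).2
    refine ⟨h3, le_min ?_ h4⟩
    rw [abs_of_nonneg (by linarith)] at h2
    linarith
  -- the displacement sup
  have hSne : S.Nonempty := ⟨1, hS1⟩
  set d : ℝ → ℝ := fun x => S.sup' hSne fun s => |f s x - x| with hd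
  have hdle : ∀ x : ℝ, ∀ s ∈ S, |f s x - x| ≤ d x := fun x s hs => Finset.le_sup' (fun s => |f s x - x|) hs
  have hd0 : ∀ x : ℝ, 0 ≤ d x := fun x => le_trans (abs_nonneg _) (hdle x 1 hS1)
  -- boundedness
  have hB : ∀ γ : Γ, ∃ C ≥ (1:ℝ), ∃ δ > (0:ℝ), ∀ x ∈ J δ, |f γ x - x| ≤ C * d x := by
    intro γ
    have hγ : γ ∈ Submonoid.closure (S : Set Γ) := by rw [hSgen]; trivial
    induction hγ using Submonoid.closure_induction with
    | mem s hs => exact ⟨1, le_rfl, 1, one_pos, fun x hx => by rw [one_mul]; exact hdle x s hs⟩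
    | one => exact ⟨1, le_rfl, 1, one_pos, fun x hx => by rw [one_mul]; exact hdle x 1 hS1⟩
    | mul γ η _ _ ihγ ihη =>
      obtain ⟨C₁, hC₁, δ₁, hδ₁, h₁⟩ := ihγ
      obtain ⟨C₂, hC₂, δ₂, hδ₂, h₂⟩ := ihη
      obtain ⟨δ₃, hδ₃, h₃⟩ := hE1 γ 1 one_pos
      obtain ⟨δ₄, hδ₄, h₄⟩ := hJin η δ₃ hδ₃
      refine ⟨C₁ + 2*C₂, by linarith, min (min δ₁ δ₂) (min δ₃ δ₄), by positivity, ?_⟩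
      intro x hx
      have hx₁ : x ∈ J δ₁ := hJmono (le_trans (min_le_left _ _) (min_le_left _ _)) hx
      have hx₂ : x ∈ J δ₂ := hJmono (le_trans (min_le_left _ _) (min_le_right _ _)) hx
      have hx₃ : x ∈ J δ₃ := hJmono (le_trans (min_le_right _ _) (min_le_left _ _)) hx
      have hx₄ : x ∈ J δ₄ := hJmono (le_trans (min_le_right _ _) (min_le_right _ _)) hx
      have hxI : x ∈ Icc (0:ℝ) 1 := hJsub _ hx
      have hy₃ : f η x ∈ J δ₃ := h₄ x hx₄
      have key : |f γ (f η x) - f η x| ≤ |f γ x - x| + 1 * |f η x - x| := by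
        have := h₃ x hx₃ (f η x) hy₃
        have habs : |f γ (f η x) - f η x| - |f γ x - x| ≤ |(f γ (f η x) - f η x) - (f γ x - x)| :=
          abs_sub_abs_le_abs_sub _ _
        linarith
      calc |f (γ * η) x - x| = |(f γ (f η x) - f η x) + (f η x - x)| := by
            rw [hmul γ η x hxI]; ring_nf
      _ ≤ |f γ (f η x) - f η x| + |f η x - x| := abs_add_le _ _
      _ ≤ (|f γ x - x| + 1 * |f η x - x|) + |f η x - x| := by linarith
      _ ≤ (C₁ * d x + C₂ * d x) + C₂ * d x := by
            have e1 := h₁ x hx₁; have e2 := h₂ x hx₂; linarith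
      _ = (C₁ + 2*C₂) * d x := by ring
  -- near-additivity
  have hE3 : ∀ γ η : Γ, ∀ ε > (0:ℝ), ∃ δ > (0:ℝ), ∀ x ∈ J δ,
      |(f (γ*η) x - x) - (f γ x - x) - (f η x - x)| ≤ ε * d x := by
    intro γ η ε hε
    obtain ⟨C₂, hC₂, δ₂, hδ₂, h₂⟩ := hB η
    obtain ⟨δ₃, hδ₃, h₃⟩ := hE1 γ (ε / C₂) (by positivity)
    obtain ⟨δ₄, hδ₄, h₄⟩ := hJin η δ₃ hδ₃
    refine ⟨min δ₂ (min δ₃ δ₄), by positivity, ?_⟩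
    intro x hx
    have hx₂ : x ∈ J δ₂ := hJmono (min_le_left _ _) hx
    have hx₃ : x ∈ J δ₃ := hJmono (le_trans (min_le_right _ _) (min_le_left _ _)) hx
    have hx₄ : x ∈ J δ₄ := hJmono (le_trans (min_le_right _ _) (min_le_right _ _)) hx
    have hxI : x ∈ Icc (0:ℝ) 1 := hJsub _ hx
    have hy₃ : f η x ∈ J δ₃ := h₄ x hx₄
    have heq : (f (γ*η) x - x) - (f γ x - x) - (f η x - x)
        = (f γ (f η x) - f η x) - (f γ x - x) := by
      rw [hmul γ η x hxI]; ring
    rw [heq]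
    calc |(f γ (f η x) - f η x) - (f γ x - x)| ≤ (ε / C₂) * |f η x - x| :=
          h₃ x hx₃ (f η x) hy₃
    _ ≤ (ε / C₂) * (C₂ * d x) := by
          apply mul_le_mul_of_nonneg_left (h₂ x hx₂) (by positivity)
    _ = ε * d x := by field_simp
  -- main contradiction argument
  by_contra hcon
  push_neg at hcon
  have hseq : ∀ n : ℕ, ∃ x, x ∈ J (1/(n+1)) ∧ ∃ s ∈ S, f s x ≠ x := by
    intro n
    obtain ⟨x, hx, γ, hγ⟩ := hcon (1/(n+1)) (by positivity)
    have hxI := hJsub _ hx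
    have : ¬ (∀ s ∈ S, f s x = x) := fun h => hγ (hfixall x hxI h γ)
    push_neg at this
    exact ⟨x, hx, this⟩
  choose x hxJ hmov using hseq
  have hxI : ∀ n, x n ∈ Icc (0:ℝ) 1 := fun n => hJsub _ (hxJ n)
  have hdpos : ∀ n, 0 < d (x n) := by
    intro n
    obtain ⟨s, hs, hne⟩ := hmov n
    exact lt_of_lt_of_le (abs_pos.2 (sub_ne_zero.2 hne)) (hdle _ s hs)
  have hxJ' : ∀ δ > (0:ℝ), ∀ᶠ n in atTop, x n ∈ J δ := by
    intro δ hδ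
    obtain ⟨N, hN⟩ := exists_nat_one_div_lt hδ
    filter_upwards [eventually_ge_atTop N] with n hn
    refine hJmono ?_ (hxJ n)
    have h1 : (1:ℝ)/(n+1) ≤ 1/(N+1) := by
      apply one_div_le_one_div_of_le (by positivity)
      have : (N:ℝ) ≤ n := Nat.cast_le.2 hn
      linarith
    linarith
  set q : Γ → ℕ → ℝ := fun γ n => (f γ (x n) - x n) / d (x n) with hq
  set U : Ultrafilter ℕ := Ultrafilter.of atTop with hUdef
  have hU : (U : Filter ℕ) ≤ atTop := Ultrafilter.of_le _
  have hconv : ∀ γ : Γ, ∃ L, Tendsto (q γ) (U : Filter ℕ) (𝓝 L) := by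
    intro γ
    obtain ⟨C, hC, δ, hδ, hCb⟩ := hB γ
    have hev : ∀ᶠ n in (U : Filter ℕ), q γ n ∈ Icc (-C) C := by
      filter_upwards [hU (hxJ' δ hδ)] with n hn
      have h1 := hCb (x n) hn
      have h2 := hdpos n
      have h3 : |q γ n| ≤ C := by
        rw [hq]
        rw [abs_div, abs_of_pos h2, div_le_iff₀ h2]
        calc |f γ (x n) - x n| ≤ C * d (x n) := h1
        _ = C * d (x n) := rfl
      exact abs_le.1 h3
    obtain ⟨L, _, hL2⟩ := (isCompact_Icc (a := -C) (b := C)).ultrafilter_le_nhds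
      (U.map (q γ)) (by rwa [Ultrafilter.coe_map, le_principal_iff, mem_map])
    exact ⟨L, by rwa [Ultrafilter.coe_map] at hL2⟩
  choose φ hφ using hconv
  have hadd : ∀ γ η : Γ, φ (γ*η) = φ γ + φ η := by
    intro γ η
    have hzero : Tendsto (fun n => q (γ*η) n - q γ n - q η n) atTop (𝓝 0) := by
      rw [NormedAddCommGroup.tendsto_nhds_zero]
      intro ε hε
      obtain ⟨δ, hδ, h3⟩ := hE3 γ η (ε/2) (by linarith)
      filter_upwards [hxJ' δ hδ] with n hn
      have h2 := hdpos n
      have : |q (γ*η) n - q γ n - q η n| ≤ ε/2 := by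
        have heq : q (γ*η) n - q γ n - q η n
            = ((f (γ*η) (x n) - x n) - (f γ (x n) - x n) - (f η (x n) - x n)) / d (x n) := by
          rw [hq]; field_simp
        rw [heq, abs_div, abs_of_pos h2, div_le_iff₀ h2]
        calc |(f (γ*η) (x n) - x n) - (f γ (x n) - x n) - (f η (x n) - x n)|
            ≤ (ε/2) * d (x n) := h3 (x n) hn
        _ = ε/2 * d (x n) := rfl
      rw [Real.norm_eq_abs]
      linarith
    have h1 : Tendsto (fun n => q γ n + q η n + (q (γ*η) n - q γ n - q η n))
        (U : Filter ℕ) (𝓝 (φ γ + φ η + 0)) :=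
      ((hφ γ).add (hφ η)).add (hzero.mono_left hU)
    have h2 : (fun n => q γ n + q η n + (q (γ*η) n - q γ n - q η n)) = q (γ*η) := by
      funext n; ring
    rw [h2, add_zero] at h1
    exact tendsto_nhds_unique (hφ (γ*η)) h1
  have hmax : ∀ n, ∃ s, s ∈ S ∧ d (x n) = |f s (x n) - x n| := by
    intro n
    obtain ⟨s, hs, hse⟩ := Finset.exists_mem_eq_sup' hSne (fun s => |f s (x n) - x n|)
    exact ⟨s, hs, hse⟩
  choose σ hσS hσ using hmax
  have hpart : ∃ t ∈ S, {n | σ n = t} ∈ U := by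
    have huniv : (⋃ t ∈ (S : Set Γ), {n | σ n = t}) ∈ U := by
      have : (⋃ t ∈ (S : Set Γ), {n | σ n = t}) = univ := by
        ext n; simp only [mem_iUnion, mem_setOf_eq, mem_univ, iff_true]
        exact ⟨σ n, hσS n, rfl⟩
      rw [this]; exact univ_mem
    rcases (Ultrafilter.finite_biUnion_mem_iff S.finite_toSet).1 huniv with ⟨t, htS, htU⟩
    exact ⟨t, htS, htU⟩
  obtain ⟨t, htS, htU⟩ := hpart
  have habs : Tendsto (fun n => |q t n|) (U : Filter ℕ) (𝓝 |φ t|) := (hφ t).abs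
  have hone' : ∀ᶠ n in (U : Filter ℕ), |q t n| = 1 := by
    filter_upwards [htU] with n hn
    have h2 := hdpos n
    have hdn : d (x n) = |f t (x n) - x n| := by rw [← hn]; exact hσ n
    rw [hq]
    simp only [abs_div, abs_of_pos h2, ← hdn, div_self h2.ne']
  have htend1 : Tendsto (fun n => |q t n|) (U : Filter ℕ) (𝓝 1) :=
    tendsto_const_nhds.congr' (hone'.mono fun n h => h.symm)
  have hval : |φ t| = 1 := tendsto_nhds_unique habs htend1
  have := homtriv hab φ hadd t
  rw [this] at hval
  norm_num at hval



/-- Thurston stability on the interval. Let `Γ` be a finitely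
generated group with finite abelianization, acting on `[0,1]` by `C¹` diffeomorphisms
fixing `0`: i.e. `γ ↦ f γ` sends `1` to the identity on `[0,1]`, satisfies
`f (γ₁γ₂) = f γ₁ ∘ f γ₂` on `[0,1]`, and each `f γ` maps `[0,1]` bijectively onto
itself, fixes `0`, and is continuously differentiable on `[0,1]` (one-sided at the
endpoints) with everywhere strictly positive derivative `f' γ`. Then the action is
trivial: `f γ x = x` for all `γ ∈ Γ` and `x ∈ [0,1]`. -/
theorem stmt6 (Γ : Type*) [Group Γ] [Group.FG Γ]
    (hab : Finite (Abelianization Γ))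
    (f : Γ → ℝ → ℝ) (f' : Γ → ℝ → ℝ)
    (hone : ∀ x ∈ Icc (0:ℝ) 1, f 1 x = x)
    (hmul : ∀ γ₁ γ₂ : Γ, ∀ x ∈ Icc (0:ℝ) 1, f (γ₁ * γ₂) x = f γ₁ (f γ₂ x))
    (hbij : ∀ γ : Γ, BijOn (f γ) (Icc (0:ℝ) 1) (Icc (0:ℝ) 1))
    (hf0 : ∀ γ : Γ, f γ 0 = 0)
    (hderiv : ∀ γ : Γ, ∀ x ∈ Icc (0:ℝ) 1,
      HasDerivWithinAt (f γ) (f' γ x) (Icc (0:ℝ) 1) x)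
    (hderivcont : ∀ γ : Γ, ContinuousOn (f' γ) (Icc (0:ℝ) 1))
    (hderivpos : ∀ γ : Γ, ∀ x ∈ Icc (0:ℝ) 1, 0 < f' γ x) :
    ∀ γ : Γ, ∀ x ∈ Icc (0:ℝ) 1, f γ x = x := by
  -- a symmetric finite generating set containing 1
  obtain ⟨S₁, hS₁cl, hS₁fin⟩ := Group.fg_iff.1 ‹Group.FG Γ›
  obtain ⟨S₀, hS₀⟩ : ∃ S₀ : Finset Γ, (S₀ : Set Γ) = S₁ := ⟨hS₁fin.toFinset, hS₁fin.coe_toFinset⟩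
  classical
  set S : Finset Γ := insert 1 (S₀ ∪ S₀.image fun s => s⁻¹) with hSdef
  have hS1 : (1:Γ) ∈ S := Finset.mem_insert_self _ _
  have hSsub : (S₁ : Set Γ) ⊆ (S : Set Γ) := by
    rw [← hS₀]
    intro x hx
    simp only [hSdef, Finset.coe_insert, Finset.coe_union, Finset.coe_image, mem_insert_iff,
      mem_union] at *
    exact Or.inr (Or.inl hx)
  have hSgen' : Subgroup.closure (S : Set Γ) = ⊤ :=
    top_unique (hS₁cl ▸ Subgroup.closure_mono hSsub)
  have hSsymm : (S : Set Γ) ∪ (S : Set Γ)⁻¹ = (S : Set Γ) := by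
    apply union_eq_self_of_subset_right
    intro x hx
    have hx' : x⁻¹ ∈ (S : Set Γ) := hx
    simp only [hSdef, Finset.coe_insert, Finset.coe_union, Finset.coe_image, mem_insert_iff,
      mem_union, mem_image] at hx' ⊢
    rcases hx' with h | h | ⟨s, hs, hse⟩
    · left; rw [← inv_inv x, h, inv_one]
    · right; right; exact ⟨x⁻¹, h, inv_inv x⟩
    · right; left
      have : x = s := by rw [← inv_inv x, ← hse, inv_inv]
      rwa [this]
  have hSgen : Submonoid.closure (S : Set Γ) = ⊤ := by
    have h := Subgroup.closure_toSubmonoid (S : Set Γ)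
    rw [hSsymm, hSgen'] at h
    rw [← h, Subgroup.top_toSubmonoid]
  -- the set of initial segments fixed pointwise
  set T : Set ℝ := {t : ℝ | t ∈ Icc (0:ℝ) 1 ∧ ∀ y ∈ Icc (0:ℝ) t, ∀ γ : Γ, f γ y = y} with hT
  have h0T : (0:ℝ) ∈ T := by
    refine ⟨⟨le_rfl, zero_le_one⟩, fun y hy γ => ?_⟩
    have : y = 0 := le_antisymm hy.2 hy.1
    rw [this, hf0]
  have hTbdd : BddAbove T := ⟨1, fun t ht => ht.1.2⟩
  have hTne : T.Nonempty := ⟨0, h0T⟩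
  set b : ℝ := sSup T with hbdef
  have hb0 : 0 ≤ b := le_csSup hTbdd h0T
  have hb1 : b ≤ 1 := csSup_le hTne fun t ht => ht.1.2
  have hfb : ∀ y, 0 ≤ y → y < b → ∀ γ : Γ, f γ y = y := by
    intro y hy0 hyb γ
    obtain ⟨t, htT, hyt⟩ := exists_lt_of_lt_csSup hTne hyb
    exact htT.2 y ⟨hy0, hyt.le⟩ γ
  have hfbb : ∀ γ : Γ, f γ b = b := by
    rcases eq_or_lt_of_le hb0 with h | h
    · intro γ; rw [← h]; exact hf0 γ
    · intro γ
      have hbI : b ∈ Icc (0:ℝ) 1 := ⟨hb0, hb1⟩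
      have hcont : ContinuousWithinAt (f γ) (Icc (0:ℝ) 1) b :=
        (hderiv γ b hbI).continuousWithinAt
      have hbcl : b ∈ closure (Ico (0:ℝ) b) := by
        rw [closure_Ico h.ne]; exact ⟨hb0, le_rfl⟩
      have hne : (𝓝[Ico (0:ℝ) b] b).NeBot := mem_closure_iff_nhdsWithin_neBot.1 hbcl
      have h1 : Tendsto (f γ) (𝓝[Ico (0:ℝ) b] b) (𝓝 (f γ b)) :=
        hcont.tendsto.mono_left
          (nhdsWithin_mono b fun y hy => ⟨hy.1, le_trans hy.2.le hb1⟩)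
      have h2 : Tendsto (f γ) (𝓝[Ico (0:ℝ) b] b) (𝓝 b) := by
        have hid : Tendsto (fun y : ℝ => y) (𝓝[Ico (0:ℝ) b] b) (𝓝 b) :=
          tendsto_id.mono_left nhdsWithin_le_nhds
        apply hid.congr'
        filter_upwards [self_mem_nhdsWithin] with y hy
        exact (hfb y hy.1 hy.2 γ).symm
      exact tendsto_nhds_unique h1 h2
  have hbT : b ∈ T := by
    refine ⟨⟨hb0, hb1⟩, fun y hy γ => ?_⟩
    rcases lt_or_eq_of_le hy.2 with h | h
    · exact hfb y hy.1 h γ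
    · rw [h]; exact hfbb γ
  rcases eq_or_lt_of_le hb1 with hb | hb
  · intro γ x hx
    exact hbT.2 x (by rw [hb]; exact hx) γ
  · exfalso
    obtain ⟨δ, hδ, hfix⟩ := core hab f f' hone hmul hbij hderiv hderivcont hderivpos
      S hS1 hSgen b ⟨hb0, hb⟩ hfbb
    have hmem : min (b+δ) 1 ∈ T := by
      refine ⟨⟨le_min (by linarith) zero_le_one, min_le_right _ _⟩, fun y hy γ => ?_⟩
      rcases le_or_gt y b with h | h
      · exact hbT.2 y ⟨hy.1, h⟩ γ
      · exact hfix y ⟨h.le, hy.2⟩ γ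
    have hle : min (b+δ) 1 ≤ b := le_csSup hTbdd hmem
    have : b < min (b+δ) 1 := lt_min (by linarith) hb
    linarith
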